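/- As m → ∞, c_{j,k}(m) ~ m^k · C(k,j) · (-1)^{k-j} · 2^j, where c_{j,k}(m) = (m)_j (Δ₋^j/j!)(2y-m)^k|_{y=0}, Δ₋ is the backward difference operator, and C(k,j) is the binomial coefficient. -/

import Mathlib

open Filter Topology

/-- Pochhammer symbol (rising factorial) `(x)_k = x(x+1)⋯(x+k-1)`. -/
noncomputable def poch (x : ℝ) (k : ℕ) : ℝ := ∏ i ∈ Finset.range k, (x + i)

/-- Backward difference operator `Δ₋ f(y) = f(y) - f(y-1)`. -/
def bdiff (f : ℝ → ℝ) : ℝ → ℝ := fun y => f y - f (y - 1)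

/-- `c_{j,k}(m) = (m)_j (Δ₋^j/j!)(2y-m)^k |_{y=0}`. -/
noncomputable def cpoly (j k : ℕ) (m : ℕ) : ℝ :=
  poch m j * (bdiff^[j] (fun y : ℝ => (2 * y - m) ^ k) 0 / (Nat.factorial j))

lemma fwdDiff_pow_eq (l : ℕ) :
    fwdDiff (1:ℝ) (fun x => x ^ l) =
      fun x : ℝ => ∑ t ∈ Finset.range l, (l.choose t : ℝ) * x ^ t := by
  ext x
  rw [fwdDiff, add_pow]
  rw [Finset.sum_range_succ]
  simp [mul_comm]

/-- `Eval j l = Δ^[j] (x ↦ x^l) 0` for the unit forward difference on `ℝ`. -/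
noncomputable def Eval (j l : ℕ) : ℝ := (fwdDiff (1:ℝ))^[j] (fun x : ℝ => x ^ l) 0

lemma E_lt : ∀ l j : ℕ, l < j → (fwdDiff (1:ℝ))^[j] (fun x => x ^ l) 0 = 0 := by
  intro l
  induction l using Nat.strong_induction_on with
  | _ l IH =>
    intro j hl
    obtain ⟨j, rfl⟩ : ∃ j', j = j' + 1 :=
      ⟨j - 1, (Nat.succ_pred_eq_of_pos (Nat.lt_of_le_of_lt (Nat.zero_le l) hl)).symm⟩
    rw [Function.iterate_succ_apply, fwdDiff_pow_eq]
    have h : (fun x : ℝ => ∑ t ∈ Finset.range l, (l.choose t : ℝ) * x ^ t)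
        = ∑ t ∈ Finset.range l, (l.choose t : ℝ) • (fun x : ℝ => x ^ t) := by
      ext x; simp
    rw [h, fwdDiff_iter_finset_sum]
    rw [Finset.sum_apply]
    refine Finset.sum_eq_zero fun t ht => ?_
    rw [fwdDiff_iter_const_smul]
    have := IH t (Finset.mem_range.mp ht) j
      (lt_of_lt_of_le (Finset.mem_range.mp ht) (Nat.lt_succ_iff.mp hl))
    simp [this]

lemma E_self : ∀ j : ℕ, (fwdDiff (1:ℝ))^[j] (fun x => x ^ j) 0 = (j.factorial : ℝ) := by
  intro j
  induction j with
  | zero => simp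
  | succ j IH =>
    rw [Function.iterate_succ_apply, fwdDiff_pow_eq]
    have h : (fun x : ℝ => ∑ t ∈ Finset.range (j+1), ((j+1).choose t : ℝ) * x ^ t)
        = ∑ t ∈ Finset.range (j+1), ((j+1).choose t : ℝ) • (fun x : ℝ => x ^ t) := by
      ext x; simp
    rw [h, fwdDiff_iter_finset_sum, Finset.sum_apply, Finset.sum_range_succ]
    rw [Finset.sum_eq_zero (fun t ht => ?_)]
    · rw [fwdDiff_iter_const_smul]
      simp [IH, Nat.choose_succ_self_right, Nat.factorial_succ]
    · rw [fwdDiff_iter_const_smul]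
      have := E_lt t j (Finset.mem_range.mp ht)
      simp [this]

lemma bdiff_iter_eq : ∀ (j : ℕ) (f : ℝ → ℝ) (x : ℝ),
    bdiff^[j] f x = (-1:ℝ)^j * (fwdDiff (1:ℝ))^[j] (fun y => f (-y)) (-x) := by
  intro j
  induction j with
  | zero => intro f x; simp
  | succ j IH =>
    intro f x
    rw [Function.iterate_succ_apply, IH (bdiff f) x, Function.iterate_succ_apply]
    have h1 : fwdDiff (1:ℝ) (fun y => f (-y)) = (-1:ℝ) • (fun y => bdiff f (-y)) := by
      ext y
      simp only [fwdDiff, bdiff, Pi.smul_apply, smul_eq_mul]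
      ring_nf
    rw [h1, fwdDiff_iter_const_smul]
    simp only [Pi.smul_apply, smul_eq_mul, pow_succ]
    ring

lemma S_eq (j k : ℕ) (c : ℝ) :
    (fwdDiff (1:ℝ))^[j] (fun x => (2*x + c)^k) 0
      = ∑ l ∈ Finset.range (k+1),
          (k.choose l : ℝ) * 2^l * c^(k-l) * ((fwdDiff (1:ℝ))^[j] (fun x : ℝ => x^l) 0) := by
  have h : (fun x : ℝ => (2*x + c)^k)
      = ∑ l ∈ Finset.range (k+1), ((k.choose l : ℝ) * 2^l * c^(k-l)) • (fun x : ℝ => x^l) := by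
    ext x
    rw [add_pow]
    rw [Finset.sum_apply]
    refine Finset.sum_congr rfl fun l hl => ?_
    simp [mul_pow]
    ring
  rw [h, fwdDiff_iter_finset_sum, Finset.sum_apply]
  refine Finset.sum_congr rfl fun l hl => ?_
  rw [fwdDiff_iter_const_smul]
  simp

lemma Eval_lt (l j : ℕ) (h : l < j) : Eval j l = 0 := E_lt l j h

lemma Eval_self (j : ℕ) : Eval j j = (j.factorial : ℝ) := E_self j

lemma cpoly_eq (j k m : ℕ) :
    cpoly j k m = poch m j * ((-1:ℝ)^(j+k) *
      (∑ l ∈ Finset.range (k+1),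
        (k.choose l : ℝ) * 2^l * (m:ℝ)^(k-l) * Eval j l))
      / (j.factorial : ℝ) := by
  simp only [Eval]
  rw [cpoly, bdiff_iter_eq j _ 0]
  have h : (fun y : ℝ => (2 * (-y) - (m:ℝ)) ^ k)
      = (-1:ℝ)^k • (fun x : ℝ => (2*x + (m:ℝ))^k) := by
    ext y
    simp only [Pi.smul_apply, smul_eq_mul, ← neg_pow]
    ring_nf
  rw [neg_zero, h, fwdDiff_iter_const_smul]
  simp only [Pi.smul_apply, smul_eq_mul, S_eq j k (m:ℝ)]
  rw [pow_add]
  ring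

lemma hpoch_aux (j : ℕ) :
    Tendsto (fun m : ℕ => poch m j / (m:ℝ)^j) atTop (𝓝 1) := by
  have h : Tendsto (fun m : ℕ => (∏ i ∈ Finset.range j, (((m:ℝ) + i) / m))) atTop
      (𝓝 (∏ i ∈ Finset.range j, (1:ℝ))) := by
    refine tendsto_finset_prod _ fun i _ => ?_
    have h2 : Tendsto (fun m : ℕ => 1 + (i:ℝ) * ((m:ℝ))⁻¹) atTop (𝓝 (1 + (i:ℝ) * 0)) :=
      tendsto_const_nhds.add (tendsto_const_nhds.mul tendsto_inv_atTop_nhds_zero_nat)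
    rw [mul_zero, add_zero] at h2
    refine Tendsto.congr' ?_ h2
    filter_upwards [eventually_ge_atTop 1] with m hm
    have hm0 : (m:ℝ) ≠ 0 := by positivity
    field_simp
  rw [Finset.prod_const_one] at h
  refine Tendsto.congr' ?_ h
  filter_upwards [eventually_ge_atTop 1] with m hm
  rw [Finset.prod_div_distrib, Finset.prod_const, Finset.card_range, poch]

lemma hsum_aux (j k : ℕ) (hjk : j ≤ k) (E : ℕ → ℝ)
    (hE0 : ∀ l < j, E l = 0) :
    Tendsto (fun m : ℕ =>
        (∑ l ∈ Finset.range (k+1), (k.choose l : ℝ) * 2^l * (m:ℝ)^(k-l) * E l)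
          / (m:ℝ)^(k-j))
      atTop (𝓝 ((k.choose j : ℝ) * 2^j * E j)) := by
  have key : Tendsto (fun m : ℕ =>
      ∑ l ∈ Finset.range (k+1),
        ((k.choose l : ℝ) * 2^l * (m:ℝ)^(k-l) * E l) / (m:ℝ)^(k-j)) atTop
      (𝓝 (∑ l ∈ Finset.range (k+1),
        if l = j then (k.choose j : ℝ) * 2^j * E j else 0)) := by
    refine tendsto_finset_sum _ fun l hl => ?_
    rw [Finset.mem_range, Nat.lt_succ_iff] at hl
    rcases lt_trichotomy l j with h | rfl | h
    · simp [hE0 l h, h.ne]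
    · simp only [if_pos rfl]
      have hev : (fun m : ℕ => (k.choose l : ℝ) * 2^l * E l) =ᶠ[atTop]
          (fun m : ℕ => ((k.choose l : ℝ) * 2^l * (m:ℝ)^(k-l) * E l) / (m:ℝ)^(k-l)) := by
        filter_upwards [eventually_ge_atTop 1] with m hm
        have hm0 : (m:ℝ) ≠ 0 := by positivity
        field_simp
      exact Tendsto.congr' hev tendsto_const_nhds
    · simp only [if_neg h.ne']
      have hev : (fun m : ℕ => ((k.choose l : ℝ) * 2^l * E l) * (((m:ℝ))⁻¹)^(l-j))
          =ᶠ[atTop]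
          (fun m : ℕ => ((k.choose l : ℝ) * 2^l * (m:ℝ)^(k-l) * E l) / (m:ℝ)^(k-j)) := by
        filter_upwards [eventually_ge_atTop 1] with m hm
        have hm0 : (m:ℝ) ≠ 0 := by positivity
        have hsplit : (m:ℝ)^(k-j) = (m:ℝ)^(k-l) * (m:ℝ)^(l-j) := by
          rw [← pow_add]; congr 1; omega
        rw [hsplit, inv_pow]
        field_simp
      have hlim : Tendsto (fun m : ℕ =>
          ((k.choose l : ℝ) * 2^l * E l) * (((m:ℝ))⁻¹)^(l-j)) atTop (𝓝 0) := by
        have h1 : Tendsto (fun m : ℕ => (((m:ℝ))⁻¹)^(l-j)) atTop (𝓝 ((0:ℝ)^(l-j))) :=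
          tendsto_inv_atTop_nhds_zero_nat.pow _
        rw [zero_pow (by omega : l - j ≠ 0)] at h1
        simpa using h1.const_mul _
      exact Tendsto.congr' hev hlim
  rw [Finset.sum_ite_eq' (Finset.range (k+1)) j, if_pos (by simp [Nat.lt_succ_iff, hjk])] at key
  refine Tendsto.congr (fun m => ?_) key
  rw [Finset.sum_div]

/-- as `m → ∞`, `c_{j,k}(m) ~ m^k · C(k,j) · (-1)^{k-j} · 2^j`. -/
theorem cpoly_asymp (j k : ℕ) (hjk : j ≤ k) :
    Tendsto
      (fun m : ℕ => cpoly j k m /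
        ((m:ℝ) ^ k * (Nat.choose k j : ℝ) * (-1 : ℝ) ^ (k - j) * 2 ^ j))
      atTop (𝓝 1) := by
  have hf : (j.factorial : ℝ) ≠ 0 := by positivity
  have hc : (k.choose j : ℝ) ≠ 0 := Nat.cast_ne_zero.mpr (Nat.choose_pos hjk).ne'
  have hs : ((-1:ℝ))^(k-j) ≠ 0 := pow_ne_zero _ (by norm_num)
  have hB := hsum_aux j k hjk (Eval j) (fun l hl => Eval_lt l j hl)
  rw [Eval_self j] at hB
  have hA := hpoch_aux j
  have hlim := (hA.mul (hB.const_mul ((-1:ℝ)^(j+k) / (j.factorial : ℝ)))).div_const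
      ((k.choose j : ℝ) * (-1:ℝ)^(k-j) * 2^j)
  have hone : (1:ℝ) * ((-1:ℝ)^(j+k) / (j.factorial:ℝ) *
        ((k.choose j:ℝ) * 2^j * (j.factorial:ℝ))) /
        ((k.choose j : ℝ) * (-1:ℝ)^(k-j) * 2^j) = 1 := by
    have hpow : (-1:ℝ)^(j+k) = (-1:ℝ)^(k-j) := by
      have h2 : j + k = 2*j + (k-j) := by omega
      rw [h2, pow_add, pow_mul]
      norm_num
    rw [hpow]
    field_simp
  rw [hone] at hlim
  refine Tendsto.congr' ?_ hlim
  filter_upwards [eventually_ge_atTop 1] with m hm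
  have hm0 : (m:ℝ) ≠ 0 := by positivity
  have hmj : (m:ℝ)^j ≠ 0 := pow_ne_zero _ hm0
  have hmkj : (m:ℝ)^(k-j) ≠ 0 := pow_ne_zero _ hm0
  have hk2 : (m:ℝ)^k = (m:ℝ)^j * (m:ℝ)^(k-j) := by
    rw [← pow_add]; congr 1; omega
  rw [cpoly_eq, hk2]
  field_simp
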